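/- The group with presentation ⟨x, y | x⁻¹yx = y³xy, x(y⁻³x⁻¹y⁻³)² = (y⁻³x⁻¹y⁻³)x²⟩ is isomorphic to the group ⟨a, y | yay⁻¹ = a², a⁵⁵ = 1⟩. -/

import Mathlib

/-- Generators: `0 ↦ x`, `1 ↦ y`.  Relations: `x⁻¹yx = y³xy` and `xw² = wx²` where
`w = y⁻³x⁻¹y⁻³`. -/
def kishinoRels : Set (FreeGroup (Fin 2)) :=
  { (FreeGroup.of 0)⁻¹ * FreeGroup.of 1 * FreeGroup.of 0 *
      ((FreeGroup.of 1) ^ 3 * FreeGroup.of 0 * FreeGroup.of 1)⁻¹,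
    FreeGroup.of 0 * ((FreeGroup.of 1) ^ (-3 : ℤ) * (FreeGroup.of 0)⁻¹ *
        (FreeGroup.of 1) ^ (-3 : ℤ)) ^ 2 *
      (((FreeGroup.of 1) ^ (-3 : ℤ) * (FreeGroup.of 0)⁻¹ * (FreeGroup.of 1) ^ (-3 : ℤ)) *
        (FreeGroup.of 0) ^ 2)⁻¹ }

/-- Generators: `0 ↦ a`, `1 ↦ y`.  Relations: `yay⁻¹ = a²` and `a⁵⁵ = 1`. -/
def kishinoRels' : Set (FreeGroup (Fin 2)) :=
  { FreeGroup.of 1 * FreeGroup.of 0 * (FreeGroup.of 1)⁻¹ * ((FreeGroup.of 0) ^ 2)⁻¹,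
    (FreeGroup.of 0) ^ 55 }


theorem mk_rel' {β : Type*} {rels : Set (FreeGroup β)} {r : FreeGroup β} (h : r ∈ rels) :
    PresentedGroup.mk rels r = 1 := by
  have hm : r ∈ Subgroup.normalClosure rels := Subgroup.subset_normalClosure h
  exact (QuotientGroup.eq_one_iff r).mpr hm

section Generic
variable {G : Type*} [Group G]

theorem conj_zpow_two (a y : G) (h : y * a * y⁻¹ = a ^ 2) (n : ℤ) :
    y * a ^ n * y⁻¹ = a ^ (2 * n) := by
  calc y * a ^ n * y⁻¹ = (y * a * y⁻¹) ^ n := conj_zpow.symm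
  _ = (a ^ (2:ℤ)) ^ n := by rw [h, ← zpow_natCast a 2]; norm_num
  _ = a ^ (2 * n) := (zpow_mul a 2 n).symm

theorem conj_cube (a y : G) (h : y * a * y⁻¹ = a ^ 2) (n : ℤ) :
    y ^ 3 * a ^ n * (y ^ 3)⁻¹ = a ^ (8 * n) := by
  have e1 : ∀ t : G, y ^ 3 * t * (y ^ 3)⁻¹ = y * (y * (y * t * y⁻¹) * y⁻¹) * y⁻¹ := by
    intro t; simp only [pow_succ, pow_zero, one_mul, mul_inv_rev, mul_assoc]
  rw [e1, conj_zpow_two a y h n, conj_zpow_two a y h (2*n), conj_zpow_two a y h (2*(2*n))]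
  ring_nf

theorem push3 (a y : G) (h : y * a * y⁻¹ = a ^ 2) (n : ℤ) :
    a ^ n * (y ^ 3)⁻¹ = (y ^ 3)⁻¹ * a ^ (8 * n) := by
  have e1 : ∀ t : G, t * (y ^ 3)⁻¹ = (y ^ 3)⁻¹ * (y ^ 3 * t * (y ^ 3)⁻¹) := by
    intro t; simp only [mul_assoc, mul_inv_cancel_left, inv_mul_cancel_left]
  rw [e1, conj_cube a y h n]

/-- The key cancellation chain, abstractly: if `a^n z = z a^(8n)` and `a⁵⁵ = 1` then
`a z a⁻¹ z a⁻¹ z = a⁻¹ z a z a z`. -/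
theorem chain (a z : G) (h8 : ∀ n : ℤ, a ^ n * z = z * a ^ (8 * n))
    (h55 : a ^ (55:ℤ) = 1) :
    a * (z * (a⁻¹ * (z * (a⁻¹ * z)))) = a⁻¹ * (z * (a * (z * (a * z)))) := by
  have h8' : ∀ (n : ℤ) (t : G), a ^ n * (z * t) = z * (a ^ (8 * n) * t) := fun n t => by
    rw [← mul_assoc, h8, mul_assoc]
  have h8a : ∀ t : G, a * (z * t) = z * (a ^ (8:ℤ) * t) := fun t => by
    have := h8' 1 t; norm_num at this; exact_mod_cast this
  have h8i : ∀ t : G, a⁻¹ * (z * t) = z * (a ^ (-8:ℤ) * t) := fun t => by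
    have := h8' (-1) t; norm_num [zpow_neg] at this ⊢; exact this
  have hA : ∀ (n : ℤ) (t : G), a ^ n * (a⁻¹ * t) = a ^ (n - 1) * t := fun n t => by
    rw [← mul_assoc, ← zpow_sub_one]
  have hB : ∀ (n : ℤ) (t : G), a ^ n * (a * t) = a ^ (n + 1) * t := fun n t => by
    rw [← mul_assoc, ← zpow_add_one]
  have h55i : a ^ (-55:ℤ) = 1 := by
    rw [show a ^ (-55:ℤ) = (a ^ (55:ℤ))⁻¹ from by rw [← zpow_neg], h55, inv_one]
  calc a * (z * (a⁻¹ * (z * (a⁻¹ * z))))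
      = z * (a ^ (8:ℤ) * (a⁻¹ * (z * (a⁻¹ * z)))) := by rw [h8a]
  _ = z * (a ^ (7:ℤ) * (z * (a⁻¹ * z))) := by rw [hA]; norm_num
  _ = z * (z * (a ^ (56:ℤ) * (a⁻¹ * z))) := by rw [h8' 7]; norm_num
  _ = z * (z * (a ^ (55:ℤ) * z)) := by rw [hA]; norm_num
  _ = z * (z * z) := by rw [h55, one_mul]
  _ = z * (z * (a ^ (-55:ℤ) * z)) := by rw [h55i, one_mul]
  _ = z * (z * (a ^ (-56:ℤ) * (a * z))) := by rw [hB]; norm_num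
  _ = z * (a ^ (-7:ℤ) * (z * (a * z))) := by rw [h8' (-7)]; norm_num
  _ = z * (a ^ (-8:ℤ) * (a * (z * (a * z)))) := by rw [hB]; norm_num
  _ = a⁻¹ * (z * (a * (z * (a * z)))) := by rw [h8i]

end Generic

section Generic2
variable {G : Type*} [Group G]

theorem conj_cube' (a y : G) (h : y * a * y⁻¹ = a ^ 2) :
    y ^ 3 * a * (y ^ 3)⁻¹ = a ^ 8 := by
  have h1 := conj_cube a y h 1
  rw [zpow_one] at h1
  rw [h1, ← zpow_natCast a 8]
  norm_num

theorem rel1_holds (a y : G) (h : y * a * y⁻¹ = a ^ 2) :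
    (a * (y ^ 3)⁻¹)⁻¹ * y * (a * (y ^ 3)⁻¹) = y ^ 3 * (a * (y ^ 3)⁻¹) * y := by
  have key : y * a = a ^ 2 * y := by
    rw [← h]; simp only [mul_assoc, inv_mul_cancel, mul_one]
  have e : (a * (y ^ 3)⁻¹)⁻¹ * y * (a * (y ^ 3)⁻¹) = y ^ 3 * (a⁻¹ * (y * a)) * (y ^ 3)⁻¹ := by
    simp only [mul_inv_rev, inv_inv, mul_assoc]
  rw [e, key]
  have e2 : a⁻¹ * (a ^ 2 * y) = a * y := by
    rw [sq]; simp only [mul_assoc, inv_mul_cancel_left]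
  rw [e2]
  have hcomm : y * (y ^ 3)⁻¹ = (y ^ 3)⁻¹ * y := (((Commute.refl y).pow_right 3).inv_right).eq
  simp only [mul_assoc, hcomm]

theorem rel2_holds (a y : G) (h : y * a * y⁻¹ = a ^ 2) (h55 : a ^ (55:ℕ) = 1) :
    (a * (y ^ 3)⁻¹) * ((y ^ 3)⁻¹ * (a * (y ^ 3)⁻¹)⁻¹ * (y ^ 3)⁻¹) ^ 2
      = ((y ^ 3)⁻¹ * (a * (y ^ 3)⁻¹)⁻¹ * (y ^ 3)⁻¹) * (a * (y ^ 3)⁻¹) ^ 2 := by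
  set z := (y ^ 3)⁻¹ with hz
  have h8 : ∀ n : ℤ, a ^ n * z = z * a ^ (8 * n) := push3 a y h
  have h55' : a ^ (55:ℤ) = 1 := by
    rw [show (55:ℤ) = ((55:ℕ):ℤ) from rfl, zpow_natCast]; exact h55
  have hw : z * (a * z)⁻¹ * z = a⁻¹ * z := by
    simp only [mul_inv_rev, mul_assoc, mul_inv_cancel_left, inv_mul_cancel_left]
  rw [hw]
  calc (a * z) * (a⁻¹ * z) ^ 2
      = a * (z * (a⁻¹ * (z * (a⁻¹ * z)))) := by rw [sq]; simp only [mul_assoc]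
  _ = a⁻¹ * (z * (a * (z * (a * z)))) := chain a z h8 h55'
  _ = (a⁻¹ * z) * (a * z) ^ 2 := by rw [sq]; simp only [mul_assoc]

theorem g_side (x y : G) (r1 : x⁻¹ * y * x = y ^ 3 * x * y)
    (r2 : x * ((y ^ 3)⁻¹ * x⁻¹ * (y ^ 3)⁻¹) ^ 2 = ((y ^ 3)⁻¹ * x⁻¹ * (y ^ 3)⁻¹) * x ^ 2) :
    y * (x * y ^ 3) * y⁻¹ = (x * y ^ 3) ^ 2 ∧ (x * y ^ 3) ^ (55:ℕ) = 1 := by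
  set z := (y ^ 3)⁻¹ with hzdef
  obtain ⟨a, hadef⟩ : ∃ a, a = x * y ^ 3 := ⟨_, rfl⟩
  have hx : x = a * z := by
    rw [hadef, hzdef]; simp only [mul_assoc, mul_inv_cancel, mul_one]
  have claim1 : y * a * y⁻¹ = a ^ 2 := by
    have e : y * a * y⁻¹ = x * (x⁻¹ * y * x) * y ^ 2 := by
      rw [hadef]
      simp only [pow_succ, pow_zero, one_mul, mul_assoc, inv_mul_cancel_left,
        mul_inv_cancel_left, mul_inv_cancel, inv_mul_cancel, mul_one]
    rw [e, r1, hadef]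
    simp only [sq, pow_succ, pow_zero, one_mul, mul_assoc]
  obtain ⟨b, hbdef⟩ : ∃ b, b = z * a * z⁻¹ := ⟨_, rfl⟩
  obtain ⟨c, hcdef⟩ : ∃ c, c = z * b * z⁻¹ := ⟨_, rfl⟩
  have hza : ∀ t : G, z * (a * t) = b * (z * t) := by
    intro t; rw [hbdef]; simp only [mul_assoc, inv_mul_cancel_left]
  have hzai : ∀ t : G, z * (a⁻¹ * t) = b⁻¹ * (z * t) := by
    intro t; rw [hbdef]; simp only [mul_inv_rev, inv_inv, mul_assoc, inv_mul_cancel_left]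
  have hzb : ∀ t : G, z * (b * t) = c * (z * t) := by
    intro t; rw [hcdef]; simp only [mul_assoc, inv_mul_cancel_left]
  have hzbi : ∀ t : G, z * (b⁻¹ * t) = c⁻¹ * (z * t) := by
    intro t; rw [hcdef]; simp only [mul_inv_rev, inv_inv, mul_assoc, inv_mul_cancel_left]
  have hab : a = b ^ (8:ℕ) := by
    calc a = z * (y ^ 3 * a * (y ^ 3)⁻¹) * z⁻¹ := by
          rw [hzdef]; simp only [inv_inv, mul_assoc, inv_mul_cancel_left,
            mul_inv_cancel_left, mul_inv_cancel, inv_mul_cancel, mul_one]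
    _ = z * a ^ 8 * z⁻¹ := by rw [conj_cube' a y claim1]
    _ = b ^ 8 := by rw [hbdef, conj_pow]
  have hbc : b = c ^ (8:ℕ) := by
    calc b = z * a * z⁻¹ := hbdef
    _ = z * b ^ 8 * z⁻¹ := by rw [hab]
    _ = c ^ 8 := by rw [hcdef, conj_pow]
  have hac : a = c ^ (64:ℕ) := by rw [hab, hbc, ← pow_mul]
  have r2' : a * (z * (a⁻¹ * (z * (a⁻¹ * z)))) = a⁻¹ * (z * (a * (z * (a * z)))) := by
    rw [hx] at r2
    calc a * (z * (a⁻¹ * (z * (a⁻¹ * z))))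
        = (a * z) * (z * (a * z)⁻¹ * z) ^ 2 := by
          simp only [sq, mul_inv_rev, mul_assoc, inv_mul_cancel_left, mul_inv_cancel_left]
    _ = (z * (a * z)⁻¹ * z) * (a * z) ^ 2 := r2
    _ = a⁻¹ * (z * (a * (z * (a * z)))) := by
          simp only [sq, mul_inv_rev, mul_assoc, inv_mul_cancel_left, mul_inv_cancel_left]
  rw [hzai, hzai, hzbi, hza, hza, hzb] at r2'
  simp only [← mul_assoc] at r2'
  have h'' : a * b⁻¹ * c⁻¹ = a⁻¹ * b * c :=
    mul_right_cancel (mul_right_cancel (mul_right_cancel r2'))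
  have h1 : a * b⁻¹ * c⁻¹ * (a⁻¹ * b * c)⁻¹ = 1 := by rw [h'']; exact mul_inv_cancel _
  rw [hab, hbc] at h1
  have hc110 : c ^ (110:ℕ) = 1 := by
    have e : c ^ (110:ℕ) = (c ^ 8) ^ 8 * ((c ^ 8) ^ 8)⁻¹ * ((c ^ 8) ^ 8 * (c ^ 8)⁻¹ * c⁻¹ *
        (((c ^ 8) ^ 8)⁻¹ * c ^ 8 * c)⁻¹) := by group
    rw [e, h1, mul_one, mul_inv_cancel]
  have h55 : a ^ (55:ℕ) = 1 := by
    rw [hac, ← pow_mul, show 64 * 55 = 110 * 32 from rfl, pow_mul, hc110, one_pow]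
  rw [← hadef]
  exact ⟨claim1, h55⟩
end Generic2

/-- `⟨x, y | x⁻¹yx = y³xy, x(y⁻³x⁻¹y⁻³)² = (y⁻³x⁻¹y⁻³)x²⟩ ≅ ⟨a, y | yay⁻¹ = a², a⁵⁵ = 1⟩`. -/
theorem stmt_8 : Nonempty (PresentedGroup kishinoRels ≃* PresentedGroup kishinoRels') := by
  -- the generators
  set X : PresentedGroup kishinoRels := PresentedGroup.of 0 with hX
  set Y : PresentedGroup kishinoRels := PresentedGroup.of 1 with hY
  set A : PresentedGroup kishinoRels' := PresentedGroup.of 0 with hA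
  set B : PresentedGroup kishinoRels' := PresentedGroup.of 1 with hB
  -- relations in the first group
  have m1 := mk_rel' (rels := kishinoRels) (Set.mem_insert _ _)
  have m2 := mk_rel' (rels := kishinoRels) (Set.mem_insert_of_mem _ rfl)
  simp only [map_mul, map_inv, map_pow, map_zpow, zpow_neg, zpow_ofNat] at m1 m2
  rw [mul_inv_eq_one] at m1 m2
  have r1G : X⁻¹ * Y * X = Y ^ 3 * X * Y := m1
  have r2G : X * ((Y ^ 3)⁻¹ * X⁻¹ * (Y ^ 3)⁻¹) ^ 2 = ((Y ^ 3)⁻¹ * X⁻¹ * (Y ^ 3)⁻¹) * X ^ 2 := m2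
  -- relations in the second group
  have m1' := mk_rel' (rels := kishinoRels') (Set.mem_insert _ _)
  have m2' := mk_rel' (rels := kishinoRels') (Set.mem_insert_of_mem _ rfl)
  simp only [map_mul, map_inv, map_pow] at m1' m2'
  rw [mul_inv_eq_one] at m1'
  have rA : B * A * B⁻¹ = A ^ 2 := m1'
  have rA55 : A ^ (55:ℕ) = 1 := m2'
  -- consequences in the first group
  obtain ⟨cl1, cl2⟩ := g_side X Y r1G r2G
  -- the forward homomorphism x ↦ A * (B^3)⁻¹, y ↦ B
  have hφ : ∀ r ∈ kishinoRels,
      FreeGroup.lift (![A * (B ^ 3)⁻¹, B] : Fin 2 → PresentedGroup kishinoRels') r = 1 := by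
    intro r hr
    simp only [kishinoRels, Set.mem_insert_iff, Set.mem_singleton_iff] at hr
    rcases hr with rfl | rfl
    · simp only [map_mul, map_inv, map_pow, map_zpow, FreeGroup.lift_apply_of,
        Matrix.cons_val_zero, Matrix.cons_val_one, Matrix.head_cons, zpow_neg, zpow_ofNat]
      rw [mul_inv_eq_one]
      exact rel1_holds A B rA
    · simp only [map_mul, map_inv, map_pow, map_zpow, FreeGroup.lift_apply_of,
        Matrix.cons_val_zero, Matrix.cons_val_one, Matrix.head_cons, zpow_neg, zpow_ofNat]
      rw [mul_inv_eq_one]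
      exact rel2_holds A B rA rA55
  -- the backward homomorphism a ↦ X * Y^3, y ↦ Y
  have hψ : ∀ r ∈ kishinoRels',
      FreeGroup.lift (![X * Y ^ 3, Y] : Fin 2 → PresentedGroup kishinoRels) r = 1 := by
    intro r hr
    simp only [kishinoRels', Set.mem_insert_iff, Set.mem_singleton_iff] at hr
    rcases hr with rfl | rfl
    · simp only [map_mul, map_inv, map_pow, FreeGroup.lift_apply_of,
        Matrix.cons_val_zero, Matrix.cons_val_one, Matrix.head_cons]
      rw [mul_inv_eq_one]
      exact cl1
    · simp only [map_pow, FreeGroup.lift_apply_of, Matrix.cons_val_zero]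
      exact cl2
  refine ⟨MonoidHom.toMulEquiv (PresentedGroup.toGroup hφ) (PresentedGroup.toGroup hψ) ?_ ?_⟩
  · ext i
    fin_cases i
    · simp only [MonoidHom.comp_apply, MonoidHom.id_apply, Fin.zero_eta, Fin.mk_one, hA, hB,
        hX, hY, map_mul, map_inv, map_pow, PresentedGroup.toGroup.of, Matrix.cons_val_zero,
        Matrix.cons_val_one, Matrix.head_cons, mul_inv_cancel_right, inv_mul_cancel_right]
    · simp only [MonoidHom.comp_apply, MonoidHom.id_apply, Fin.zero_eta, Fin.mk_one, hA, hB,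
        hX, hY, map_mul, map_inv, map_pow, PresentedGroup.toGroup.of, Matrix.cons_val_zero,
        Matrix.cons_val_one, Matrix.head_cons, mul_inv_cancel_right, inv_mul_cancel_right]
  · ext i
    fin_cases i
    · simp only [MonoidHom.comp_apply, MonoidHom.id_apply, Fin.zero_eta, Fin.mk_one, hA, hB,
        hX, hY, map_mul, map_inv, map_pow, PresentedGroup.toGroup.of, Matrix.cons_val_zero,
        Matrix.cons_val_one, Matrix.head_cons, mul_inv_cancel_right, inv_mul_cancel_right]
    · simp only [MonoidHom.comp_apply, MonoidHom.id_apply, Fin.zero_eta, Fin.mk_one, hA, hB,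
        hX, hY, map_mul, map_inv, map_pow, PresentedGroup.toGroup.of, Matrix.cons_val_zero,
        Matrix.cons_val_one, Matrix.head_cons, mul_inv_cancel_right, inv_mul_cancel_right]
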